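/- Let N ≥ 2 be an integer that is not a power of a prime (i.e., N ≠ p^j for every prime p and every positive integer j), and let b be an integer relatively prime to N. Then the multiplicative order r of b modulo N satisfies r < N/2. -/
import Mathlib
set_option linter.unnecessarySimpa false

lemma order_dvd_totient (m : ℕ) (hm : 0 < m) (b : ℕ) (hb : Nat.Coprime b m) :
    orderOf (b : ZMod m) ∣ Nat.totient m := by
  haveI : NeZero m := ⟨hm.ne'⟩
  have h1 : ((ZMod.unitOfCoprime b hb : (ZMod m)ˣ) : ZMod m) = (b : ZMod m) :=
    ZMod.coe_unitOfCoprime b hb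
  rw [← h1, orderOf_units, ← ZMod.card_units_eq_totient]
  exact orderOf_dvd_card

lemma order_crt (m n : ℕ) (h : Nat.Coprime m n) (b : ℕ) :
    orderOf (b : ZMod (m * n)) =
      Nat.lcm (orderOf (b : ZMod m)) (orderOf (b : ZMod n)) := by
  have e := ZMod.chineseRemainder h
  have := orderOf_injective e.toRingHom.toMonoidHom e.injective (b : ZMod (m * n))
  rw [← this]
  have hb : e.toRingHom.toMonoidHom (b : ZMod (m * n)) = ((b : ZMod m), (b : ZMod n)) := by
    have : e.toRingHom.toMonoidHom (b : ZMod (m * n)) = ((b : ZMod m × ZMod n)) := by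
      simpa using map_natCast e.toRingHom b e.toRingHom b
    rw [this]
    ext <;> simp
  rw [hb, Prod.orderOf]

theorem stmt_2 (N : ℕ) (hN : 2 ≤ N)
    (hnp : ∀ (p j : ℕ), p.Prime → 0 < j → N ≠ p ^ j)
    (b : ℕ) (hb : Nat.Coprime b N) :
    (orderOf (b : ZMod N) : ℝ) < N / 2 := by
  have hN0 : N ≠ 0 := by omega
  set p := N.minFac with hp
  have hpp : p.Prime := Nat.minFac_prime (by omega)
  set k := N.factorization p with hk
  have hpd : p ∣ N := Nat.minFac_dvd N
  have hk0 : 0 < k := hpp.factorization_pos_of_dvd hN0 hpd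
  set a := p ^ k with ha
  set m := N / a with hm
  have hadvd : a ∣ N := Nat.ordProj_dvd N p
  have hNam : a * m = N := Nat.mul_div_cancel' hadvd
  have cop : Nat.Coprime a m := (Nat.coprime_ordCompl hpp hN0).pow_left k
  have hmdvd : m ∣ N := Nat.div_dvd_of_dvd hadvd
  have ha1 : 1 < a := hpp.one_lt.trans_le (Nat.le_self_pow hk0.ne' p)
  have hm1 : 1 < m := by
    rcases Nat.lt_or_ge m 2 with h | h
    · interval_cases m
      · omega
      · exact absurd (hNam.symm.trans (mul_one a)) (hnp p k hpp hk0)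
    · omega
  have hm2 : 2 < m := by
    rcases Nat.lt_or_ge m 3 with h | h
    · have hm2' : m = 2 := by omega
      have hp2 : p = 2 := by
        have h2N : 2 ∣ N := hm2' ▸ hmdvd
        have := Nat.minFac_le_of_dvd (le_refl 2) h2N
        have := hpp.two_le
        omega
      have h2a : 2 ∣ a := hp2 ▸ dvd_pow_self p hk0.ne'
      have h2m : 2 ∣ m := by omega
      have := Nat.dvd_gcd h2a h2m
      rw [cop] at this
      omega
    · omega
  -- order bounds from the two factors
  have hba : Nat.Coprime b a := Nat.Coprime.coprime_dvd_right hadvd hb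
  have hbm : Nat.Coprime b m := Nat.Coprime.coprime_dvd_right hmdvd hb
  have hda : orderOf (b : ZMod a) ∣ Nat.totient a := order_dvd_totient a (by omega) b hba
  have hdm : orderOf (b : ZMod m) ∣ Nat.totient m := order_dvd_totient m (by omega) b hbm
  have hcrt : orderOf (b : ZMod N) =
      Nat.lcm (orderOf (b : ZMod a)) (orderOf (b : ZMod m)) := by
    rw [← hNam]; exact order_crt a m cop b
  set r := orderOf (b : ZMod N) with hr
  have hrpos : 0 < r := by
    haveI : NeZero N := ⟨hN0⟩
    have heq : orderOf ((ZMod.unitOfCoprime b hb : (ZMod N)ˣ) : ZMod N) = r := by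
      rw [ZMod.coe_unitOfCoprime]
    rw [← heq, orderOf_units]
    exact orderOf_pos _
  have hdvdlcm : r ∣ Nat.lcm (Nat.totient a) (Nat.totient m) := by
    rw [hcrt]
    exact Nat.lcm_dvd (hda.trans (Nat.dvd_lcm_left _ _)) (hdm.trans (Nat.dvd_lcm_right _ _))
  rw [lt_div_iff₀ (by norm_num : (0:ℝ) < 2)]
  have key : 2 * r < N := by
    rcases Nat.lt_or_ge a 3 with h | h
    · -- a = 2, so m is odd, r ∣ φ m ≤ m - 1 < m, N = 2m
      have ha2 : a = 2 := by omega
      have hta : Nat.totient a = 1 := by rw [ha2]; decide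
      have hrdvd : r ∣ Nat.totient m := by
        rw [hta] at hdvdlcm
        simpa [Nat.lcm] using hdvdlcm
      have : r ≤ Nat.totient m := Nat.le_of_dvd (Nat.totient_pos.2 (by omega)) hrdvd
      have := Nat.totient_lt m hm1
      have hN2 : 2 * m = N := by rw [← hNam, ha2]
      omega
    · -- both totients even
      have hea : Even (Nat.totient a) := Nat.totient_even (by omega)
      have hem : Even (Nat.totient m) := Nat.totient_even hm2
      have hg : 2 ∣ Nat.gcd (Nat.totient a) (Nat.totient m) :=
        Nat.dvd_gcd hea.two_dvd hem.two_dvd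
      have hlg : Nat.gcd (Nat.totient a) (Nat.totient m) *
          Nat.lcm (Nat.totient a) (Nat.totient m) = Nat.totient a * Nat.totient m :=
        Nat.gcd_mul_lcm _ _
      have hprod : 2 * Nat.lcm (Nat.totient a) (Nat.totient m) ≤
          Nat.totient a * Nat.totient m := by
        rw [← hlg]
        exact Nat.mul_le_mul_right _ (Nat.le_of_dvd
          (Nat.gcd_pos_of_pos_left _ (Nat.totient_pos.2 (by omega))) hg)
      have htot : Nat.totient a * Nat.totient m = Nat.totient N := by
        rw [← hNam, Nat.totient_mul cop]
      have hrle : r ≤ Nat.lcm (Nat.totient a) (Nat.totient m) := by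
        apply Nat.le_of_dvd _ hdvdlcm
        exact Nat.pos_of_ne_zero (Nat.lcm_ne_zero (Nat.totient_pos.2 (by omega)).ne'
          (Nat.totient_pos.2 (by omega)).ne')
      have := Nat.totient_lt N (by omega)
      omega
  exact_mod_cast (by omega : r * 2 < N)
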